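/- Let L be an invertible tridiagonal Jacobi operator (Lf)_n = cosh(κ)f_n − (a_n f_{n+1} + a_{n-1} f_{n-1} + b_n f_n) on ℓ²(ℤ) with a_n > 0, whose Green's function G(n,m) = ⟨δ_n, L^{-1}δ_m⟩ satisfies G(n,m) → 0 as |m| → ∞ for each fixed n. Then the quadratic identity G(n,n+1)[1 + a_n G(n,n+1)] = a_n G(n,n) G(n+1,n+1) holds for all n. -/

import Mathlib

/-- For an invertible tridiagonal Jacobi operator
`(Lf)_n = cosh(κ)f_n − (a_n f_{n+1} + a_{n-1} f_{n-1} + b_n f_n)` on `ℓ²(ℤ)` with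
`a_n > 0`, whose (symmetric) Green's function `G(n,m) = ⟨δ_n, L⁻¹δ_m⟩` tends to `0`
as `|m| → ∞` for each fixed `n`, the quadratic identity
`G(n,n+1)[1 + a_n G(n,n+1)] = a_n G(n,n) G(n+1,n+1)` holds for all `n`. -/
theorem jacobi_quadratic_identity (κ : ℝ) (a b : ℤ → ℝ) (ha : ∀ n, 0 < a n)
    (L R : lp (fun _ : ℤ => ℝ) 2 →L[ℝ] lp (fun _ : ℤ => ℝ) 2)
    (hL : ∀ (f : lp (fun _ : ℤ => ℝ) 2) (j : ℤ),
      L f j = Real.cosh κ * f j - (a j * f (j + 1) + a (j - 1) * f (j - 1) + b j * f j))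
    (hR1 : R * L = 1) (hR2 : L * R = 1)
    (G : ℤ → ℤ → ℝ) (hG : ∀ i j : ℤ, G i j = R (lp.single 2 j 1) i)
    (hsymm : ∀ i j : ℤ, G i j = G j i)
    (hdecay : ∀ n : ℤ, Filter.Tendsto (fun m => G n m) Filter.cofinite (nhds 0)) :
    ∀ n : ℤ, G n (n + 1) * (1 + a n * G n (n + 1)) = a n * G n n * G (n + 1) (n + 1) := by
  intro n
  -- basic fact: L (R f) = f
  have hLR : ∀ f : lp (fun _ : ℤ => ℝ) 2, L (R f) = f := by
    intro f
    have := congrFun (congrArg (fun T : lp (fun _ : ℤ => ℝ) 2 →L[ℝ] lp (fun _ : ℤ => ℝ) 2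
      => (T : lp (fun _ : ℤ => ℝ) 2 → lp (fun _ : ℤ => ℝ) 2)) hR2) f
    simpa using this
  have hsingle : ∀ i j : ℤ, (lp.single 2 j (1:ℝ) : ∀ _ : ℤ, ℝ) i
      = if i = j then (1:ℝ) else 0 := by
    intro i j
    by_cases h : i = j
    · subst h; simp [lp.single_apply_self]
    · simp [lp.single_apply_ne 2 j _ h, h]
  -- Green's function equations
  have hGreen : ∀ k m : ℤ, Real.cosh κ * G m k -
      (a m * G (m+1) k + a (m-1) * G (m-1) k + b m * G m k)
      = if m = k then 1 else 0 := by
    intro k m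
    have h1 : ∀ i : ℤ, G i k = (R (lp.single 2 k 1) : ∀ _ : ℤ, ℝ) i := fun i => hG i k
    have h2 := hL (R (lp.single 2 k 1)) m
    rw [hLR] at h2
    rw [h1 m, h1 (m+1), h1 (m-1), ← h2, hsingle m k]
  -- u and v
  set u : ℤ → ℝ := fun m => G n m with hu_def
  set v : ℤ → ℝ := fun m => G m (n+1) with hv_def
  have hu : ∀ m, Real.cosh κ * u m - (a m * u (m+1) + a (m-1) * u (m-1) + b m * u m)
      = if m = n then 1 else 0 := by
    intro m
    have := hGreen n m
    simpa [hu_def, hsymm n] using this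
  have hv : ∀ m, Real.cosh κ * v m - (a m * v (m+1) + a (m-1) * v (m-1) + b m * v m)
      = if m = n+1 then 1 else 0 := fun m => hGreen (n+1) m
  -- Wronskian
  set W : ℤ → ℝ := fun m => a m * (u (m+1) * v m - u m * v (m+1)) with hW_def
  have hstep : ∀ m : ℤ, W m - W (m-1)
      = (if m = n+1 then 1 else 0) * u m - (if m = n then 1 else 0) * v m := by
    intro m
    have e1 : m - 1 + 1 = m := by ring
    have h1 := hu m
    have h2 := hv m
    simp only [hW_def, e1]
    linear_combination u m * h2 - v m * h1
  -- W is constant for m ≥ n+1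
  have hconst : ∀ m : ℤ, n + 1 ≤ m → W m = W (n+1) := by
    refine Int.le_induction rfl ?_
    intro m hm ih
    have hst := hstep (m+1)
    have e1 : m + 1 - 1 = m := by ring
    rw [e1, if_neg (by omega), if_neg (by omega)] at hst
    simp only [zero_mul, sub_zero] at hst
    linarith
  -- a is bounded
  have habd : ∀ m : ℤ, |a m| ≤ ‖L‖ := by
    intro m
    set f : lp (fun _ : ℤ => ℝ) 2 := lp.single 2 (m+1) 1 with hf
    have h2 := hL f m
    rw [hf, hsingle m (m+1), hsingle (m+1) (m+1), hsingle (m-1) (m+1)] at h2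
    rw [if_neg (by omega), if_pos rfl, if_neg (by omega)] at h2
    have h3 : L f m = -a m := by rw [← hf] at h2; rw [h2]; ring
    have h4 : ‖L f m‖ ≤ ‖L f‖ :=
      lp.norm_apply_le_norm (by norm_num) _ m
    have h5 : ‖f‖ = 1 := by
      have := lp.norm_single (p := 2) (E := fun _ : ℤ => ℝ) (by norm_num)
        (m+1) (1:ℝ)
      simpa [hf] using this
    have h6 : ‖L f‖ ≤ ‖L‖ := by
      calc ‖L f‖ ≤ ‖L‖ * ‖f‖ := L.le_opNorm _
        _ = ‖L‖ := by rw [h5, mul_one]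
    rw [h3] at h4
    have h7 : ‖(-a m : ℝ)‖ ≤ ‖L‖ := le_trans h4 h6
    rwa [Real.norm_eq_abs, abs_neg] at h7
  -- W tends to 0 along cofinite
  have hWlim : Filter.Tendsto W Filter.cofinite (nhds 0) := by
    have hu0 : Filter.Tendsto u Filter.cofinite (nhds 0) := hdecay n
    have hv0 : Filter.Tendsto v Filter.cofinite (nhds 0) := by
      have := hdecay (n+1)
      have : Filter.Tendsto (fun m => G (n+1) m) Filter.cofinite (nhds 0) := this
      convert this using 1
      funext m; exact hsymm m (n+1)
    have hshift : Filter.Tendsto (fun m : ℤ => m + 1) Filter.cofinite Filter.cofinite :=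
      (add_left_injective (1:ℤ)).tendsto_cofinite
    have hu1 : Filter.Tendsto (fun m => u (m+1)) Filter.cofinite (nhds 0) :=
      hu0.comp hshift
    have hv1 : Filter.Tendsto (fun m => v (m+1)) Filter.cofinite (nhds 0) :=
      hv0.comp hshift
    have hprod : Filter.Tendsto (fun m => u (m+1) * v m - u m * v (m+1))
        Filter.cofinite (nhds 0) := by
      have := (hu1.mul hv0).sub (hu0.mul hv1)
      simpa using this
    have hbd : ∀ m : ℤ, ‖W m‖ ≤ ‖L‖ * ‖u (m+1) * v m - u m * v (m+1)‖ := by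
      intro m
      simp only [hW_def, Real.norm_eq_abs, abs_mul]
      exact mul_le_mul_of_nonneg_right (habd m) (abs_nonneg _)
    have hlim2 : Filter.Tendsto (fun m => ‖L‖ * ‖u (m+1) * v m - u m * v (m+1)‖)
        Filter.cofinite (nhds 0) := by
      have h := hprod.norm
      rw [norm_zero] at h
      have := h.const_mul ‖L‖
      rwa [mul_zero] at this
    exact squeeze_zero_norm hbd hlim2
  -- hence W (n+1) = 0
  have hWzero : W (n+1) = 0 := by
    have hmap : Filter.Tendsto (fun j : ℕ => n + 1 + (j:ℤ)) Filter.atTop Filter.cofinite := by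
      have hinj : Function.Injective (fun j : ℕ => n + 1 + (j:ℤ)) := by
        intro x y hxy; simpa using hxy
      have := hinj.tendsto_cofinite
      rwa [Nat.cofinite_eq_atTop] at this
    have h1 : Filter.Tendsto (fun j : ℕ => W (n + 1 + (j:ℤ))) Filter.atTop (nhds 0) :=
      hWlim.comp hmap
    have h2 : (fun j : ℕ => W (n + 1 + (j:ℤ))) = fun _ => W (n+1) := by
      funext j
      exact hconst _ (by omega)
    rw [h2] at h1
    exact tendsto_nhds_unique tendsto_const_nhds h1
  -- step at n+1
  have hkey := hstep (n+1)
  rw [if_pos rfl, if_neg (by omega)] at hkey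
  have e1 : n + 1 - 1 = n := by ring
  rw [e1, hWzero] at hkey
  -- unravel
  have hWn : W n = a n * (u (n+1) * v n - u n * v (n+1)) := rfl
  have h1 : u (n+1) = G n (n+1) := rfl
  have h2 : v n = G n (n+1) := rfl
  have h3 : u n = G n n := rfl
  have h4 : v (n+1) = G (n+1) (n+1) := rfl
  rw [hWn, h1, h2, h3, h4] at hkey
  simp only [one_mul, zero_mul, sub_zero] at hkey
  linear_combination -hkey
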